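/- The graph 3C_4 (the 4-cycle with each edge tripled) is strongly Z_5-connected: every Z_5-boundary is achieved by some orientation. -/
import Mathlib


/-- The direction of edge `i` under orientation `o`: if `o i = true` the
reference direction is reversed. -/
def edir {V : Type} {m : ℕ} (ends : Fin m → V × V) (o : Fin m → Bool) (i : Fin m) : V × V :=
  if o i then ((ends i).2, (ends i).1) else ends i

/-- Contribution of edge `i` to `d⁺ - d⁻` at vertex `v`, computed in `ZMod n`. -/
def contrib {V : Type} [DecidableEq V] {m : ℕ} (n : ℕ) (ends : Fin m → V × V)
    (o : Fin m → Bool) (i : Fin m) (v : V) : ZMod n :=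
  (if (edir ends o i).1 = v then 1 else 0) - (if (edir ends o i).2 = v then 1 else 0)

/-- `d⁺_D(v) - d⁻_D(v)` in `ZMod n` for the orientation `o` of the multigraph
with edge-endpoint function `ends`. -/
def netDeg {V : Type} [DecidableEq V] {m : ℕ} (n : ℕ) (ends : Fin m → V × V)
    (o : Fin m → Bool) (v : V) : ZMod n :=
  ∑ i : Fin m, contrib n ends o i v

def threeC4 : Fin 12 → Fin 4 × Fin 4 :=
  ![(0, 1), (0, 1), (0, 1), (1, 2), (1, 2), (1, 2),
    (2, 3), (2, 3), (2, 3), (3, 0), (3, 0), (3, 0)]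

/-- Flip-pattern for a group of three parallel edges achieving net flow `f`. -/
def gpat (f : ZMod 5) : Fin 3 → Bool :=
  if f = 3 then ![false, false, false]
  else if f = 1 then ![true, false, false]
  else if f = 4 then ![true, true, false]
  else ![true, true, true]

/-- Orientation of `threeC4` from desired group flows. -/
def oF (f1 f2 f3 f4 : ZMod 5) : Fin 12 → Bool :=
  ![gpat f1 0, gpat f1 1, gpat f1 2, gpat f2 0, gpat f2 1, gpat f2 2,
    gpat f3 0, gpat f3 1, gpat f3 2, gpat f4 0, gpat f4 1, gpat f4 2]

lemma key : ∀ f1 f2 f3 f4 : ZMod 5, f1 ≠ 0 → f2 ≠ 0 → f3 ≠ 0 → f4 ≠ 0 →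
    ∀ v : Fin 4, netDeg 5 threeC4 (oF f1 f2 f3 f4) v
      = ![f1 - f4, f2 - f1, f3 - f2, f4 - f3] v := by decide

lemma pick : ∀ a b c : ZMod 5, ∃ x : ZMod 5,
    x ≠ 0 ∧ x + a ≠ 0 ∧ x + a + b ≠ 0 ∧ x + a + b + c ≠ 0 := by decide

theorem threeC4_strongly_Z5_connected (β : Fin 4 → ZMod 5) (hβ : ∑ v : Fin 4, β v = 0) :
    ∃ o : Fin 12 → Bool, ∀ v : Fin 4, netDeg 5 threeC4 o v = β v := by
  obtain ⟨x, h1, h2, h3, h4⟩ := pick (β 1) (β 2) (β 3)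
  refine ⟨oF x (x + β 1) (x + β 1 + β 2) (x + β 1 + β 2 + β 3), ?_⟩
  have hsum : β 0 + β 1 + β 2 + β 3 = 0 := by
    have := hβ; simp [Fin.sum_univ_four] at this; linear_combination this
  intro v
  rw [key x (x + β 1) (x + β 1 + β 2) (x + β 1 + β 2 + β 3) h1 h2 h3 h4 v]
  fin_cases v <;> simp <;> first | linear_combination hsum | linear_combination -hsum | linear_combination -2*hsum
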